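/- Let $k$ be a local field of characteristic $p>0$, $L \subset k$ a discrete cocompact subgroup, $\ell \in k$, $w \in k$, $r \in k^\times$. Then the function $a \mapsto \#\big((\ell + L) \cap a(w + r\mathcal{O})\big)$ from $k^\times$ to $\mathbb{Z}$ is locally constant, equals $\mathbf{1}_{\ell \in L}\cdot\mathbf{1}_{w \in r\mathcal{O}}$ (i.e., $1$ if $\ell \in L$ and $0 \in w + r\mathcal{O}$, else $0$) for $\|a\|$ sufficiently small. -/

import Mathlib

set_option linter.unusedSectionVars false
set_option linter.unusedVariables false

open Filter Topology Set

section Aux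
variable {k : Type*} [Field k] [TopologicalSpace k] [IsTopologicalRing k] [T2Space k]

/-- Tube lemma for multiplication by a compact set. -/
lemma aux_tube {C : Set k} (hC : IsCompact C) {W : Set k} (hW : W ∈ 𝓝 (0 : k)) :
    ∃ V ∈ 𝓝 (0 : k), ∀ v ∈ V, ∀ c ∈ C, v * c ∈ W := by
  have key : ∀ c : k, ∃ V U : Set k, V ∈ 𝓝 (0 : k) ∧ U ∈ 𝓝 c ∧
      ∀ v ∈ V, ∀ u ∈ U, v * u ∈ W := by
    intro c
    have hmul : Filter.Tendsto (fun p : k × k => p.1 * p.2) (𝓝 ((0 : k), c)) (𝓝 0) := by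
      have := (continuous_mul (M := k)).tendsto ((0 : k), c)
      simpa using this
    have hpre := hmul hW
    rw [nhds_prod_eq] at hpre
    obtain ⟨V, hV, U, hU, h⟩ := Filter.mem_prod_iff.mp hpre
    exact ⟨V, U, hV, hU, fun v hv u hu => h (Set.mk_mem_prod hv hu)⟩
  choose V U hV hU hVU using key
  obtain ⟨t, _, ht⟩ := hC.elim_nhds_subcover U (fun c _ => hU c)
  refine ⟨⋂ c ∈ t, V c, (Filter.biInter_mem t.finite_toSet).mpr (fun c _ => hV c), ?_⟩
  intro v hv c hc
  obtain ⟨c', hc', hcc'⟩ := Set.mem_iUnion₂.mp (ht hc)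
  exact hVU c' v (Set.mem_iInter₂.mp hv c' hc') c hcc'

/-- The set of units of a compact subring is compact. -/
lemma aux_units_compact (O : Subring k) (hOc : IsCompact (O : Set k)) :
    IsCompact {u : k | u ∈ O ∧ ∃ v ∈ O, u * v = 1} := by
  have hK : IsCompact {p : k × k | (p.1 ∈ O ∧ p.2 ∈ O) ∧ p.1 * p.2 = 1} := by
    have h1 : IsCompact ((O : Set k) ×ˢ (O : Set k)) := hOc.prod hOc
    have h2 : IsClosed {p : k × k | p.1 * p.2 = 1} :=
      isClosed_eq (continuous_fst.mul continuous_snd) continuous_const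
    exact h1.inter_right h2
  have himg := hK.image (continuous_fst (X := k) (Y := k))
  convert himg using 1
  ext u
  constructor
  · rintro ⟨hu, v, hv, huv⟩
    exact ⟨(u, v), ⟨⟨hu, hv⟩, huv⟩, rfl⟩
  · rintro ⟨⟨u', v⟩, ⟨⟨hu, hv⟩, huv⟩, rfl⟩
    exact ⟨hu, v, hv, huv⟩

/-- Powers of a non-unit element of a compact open subring tend to zero. -/
lemma aux_pow_tendsto (O : Subring k) (hOc : IsCompact (O : Set k))
    {ε : k} (hε : ε ∈ O) (hεn : ¬ ∃ v ∈ O, ε * v = 1) :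
    Filter.Tendsto (fun n : ℕ => ε ^ (n + 1)) atTop (𝓝 (0 : k)) := by
  set P : Set k := {x | ∃ n : ℕ, x = ε ^ (n + 1)} with hP
  have hPO : P ⊆ (O : Set k) := by
    rintro x ⟨n, rfl⟩; exact pow_mem hε (n + 1)
  have hsO : closure P ⊆ (O : Set k) := closure_minimal hPO hOc.isClosed
  have hscomp : IsCompact (closure P) := hOc.of_isClosed_subset isClosed_closure hsO
  have hsne : (closure P).Nonempty := ⟨ε ^ 1, subset_closure ⟨0, rfl⟩⟩
  have hsmul : ∀ x ∈ closure P, ∀ y ∈ closure P, x * y ∈ closure P := by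
    intro x hx y hy
    refine map_mem_closure₂ continuous_mul hx hy ?_
    rintro a ⟨n, rfl⟩ b ⟨m, rfl⟩
    exact ⟨n + m + 1, by ring⟩
  obtain ⟨m, hm, hm2⟩ := exists_idempotent_in_compact_subsemigroup
    (fun r => continuous_mul_right r) (closure P) hsne hscomp hsmul
  have hm01 : m = 0 ∨ m = 1 := by
    have : m * (m - 1) = 0 := by ring_nf; linear_combination hm2
    rcases mul_eq_zero.mp this with h | h
    · exact Or.inl h
    · exact Or.inr (sub_eq_zero.mp h)
  have hm0 : m = 0 := by
    rcases hm01 with h | h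
    · exact h
    · exfalso
      -- then 1 ∈ closure P ⊆ ε • O which is compact hence closed
      have himg : IsCompact ((fun x => ε * x) '' (O : Set k)) :=
        hOc.image (continuous_mul_left ε)
      have hPsub : P ⊆ (fun x => ε * x) '' (O : Set k) := by
        rintro x ⟨n, rfl⟩
        exact ⟨ε ^ n, pow_mem hε n, by ring⟩
      have h1mem : (1 : k) ∈ (fun x => ε * x) '' (O : Set k) := by
        have : (1 : k) ∈ closure P := h ▸ hm
        exact closure_minimal hPsub himg.isClosed this
      obtain ⟨v, hv, hv1⟩ := h1mem
      exact hεn ⟨v, hv, hv1⟩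
  -- 0 is a cluster point of the powers; upgrade to convergence
  rw [hm0] at hm
  rw [Filter.tendsto_def]
  intro W hW
  obtain ⟨V, hV, hVp⟩ := aux_tube hOc hW
  have hVW : V ∩ W ∈ 𝓝 (0 : k) := Filter.inter_mem hV hW
  obtain ⟨x, hxVW, hxP⟩ := mem_closure_iff_nhds.mp hm _ hVW
  obtain ⟨m0, rfl⟩ := hxP
  rw [Filter.mem_atTop_sets]
  refine ⟨m0, fun n hn => ?_⟩
  simp only [Set.mem_preimage]
  rcases eq_or_lt_of_le hn with h | h
  · exact h ▸ hxVW.2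
  · have : ε ^ (n + 1) = ε ^ (m0 + 1) * ε ^ (n - m0) := by
      rw [← pow_add]
      congr 1
      omega
    rw [this]
    exact hVp _ hxVW.1 _ (pow_mem hε _)

/-- Elements close to 1 are invertible in a compact open subring. -/
lemma aux_inv_mem (O : Subring k) (hOc : IsCompact (O : Set k)) (hOo : IsOpen (O : Set k)) :
    ∃ V : Set k, IsOpen V ∧ (0 : k) ∈ V ∧
      ∀ ε ∈ V, (1 + ε ∈ O ∧ ∃ v ∈ O, (1 + ε) * v = 1) := by
  have hUc := aux_units_compact O hOc
  set A : Set k := (O : Set k) ∩ {u : k | u ∈ O ∧ ∃ v ∈ O, u * v = 1}ᶜ with hA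
  have hAopen : IsOpen A := hOo.inter hUc.isClosed.isOpen_compl
  have hA0 : (0 : k) ∈ A := by
    refine ⟨O.zero_mem, ?_⟩
    rintro ⟨-, v, -, hv⟩
    simp at hv
  set V : Set k := A ∩ (fun x : k => -x) ⁻¹' A with hV
  have hVopen : IsOpen V := hAopen.inter (hAopen.preimage continuous_neg)
  have hV0 : (0 : k) ∈ V := ⟨hA0, by simpa using hA0⟩
  refine ⟨V, hVopen, hV0, ?_⟩
  intro ε hεV
  have hεA : ε ∈ A := hεV.1
  have hnεA : -ε ∈ A := hεV.2
  have hεO : ε ∈ O := hεA.1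
  have h1ε : (1 : k) + ε ∈ O := O.add_mem O.one_mem hεO
  refine ⟨h1ε, ?_⟩
  -- geometric series
  have hpow : Filter.Tendsto (fun n : ℕ => (-ε) ^ (n + 1)) atTop (𝓝 (0 : k)) :=
    aux_pow_tendsto O hOc (O.neg_mem hεO) (fun ⟨v, hv, hv1⟩ => hnεA.2 ⟨O.neg_mem hεO, v, hv, hv1⟩)
  set s : ℕ → k := fun n => ∑ j ∈ Finset.range (n + 1), (-ε) ^ j with hs
  have hsO : ∀ n, s n ∈ O := fun n =>
    sum_mem (fun j _ => pow_mem (O.neg_mem hεO) j)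
  have hgeom : ∀ n, s n * (1 + ε) = 1 - (-ε) ^ (n + 1) := by
    intro n
    have := geom_sum_mul (-ε) (n + 1)
    linear_combination -this
  have hmap : Filter.map s atTop ≤ Filter.principal (O : Set k) := by
    rw [Filter.le_principal_iff, Filter.mem_map]
    exact Filter.Eventually.mono (Filter.eventually_atTop.mpr ⟨0, fun n _ => hsO n⟩) fun n h => h
  obtain ⟨x, hxO, hxc⟩ := hOc.exists_clusterPt hmap
  have hxc2 : ClusterPt (x * (1 + ε)) (Filter.map (fun n => s n * (1 + ε)) atTop) := by
    exact hxc.map (continuous_mul_right (1 + ε)).continuousAt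
      (Filter.tendsto_map.comp Filter.tendsto_id)
  have hlim : Filter.Tendsto (fun n => s n * (1 + ε)) atTop (𝓝 (1 : k)) := by
    have : (fun n => s n * (1 + ε)) = fun n => 1 - (-ε) ^ (n + 1) := funext hgeom
    rw [this]
    simpa using (tendsto_const_nhds (x := (1:k)) (f := atTop)).sub hpow
  have hx1 : x * (1 + ε) = 1 := by
    have hle : Filter.map (fun n => s n * (1 + ε)) atTop ≤ 𝓝 (1 : k) := hlim
    have : ClusterPt (x * (1 + ε)) (𝓝 (1 : k)) := hxc2.mono hle
    exact eq_of_nhds_neBot this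
  exact ⟨x, hxO, by linear_combination hx1⟩

end Aux


/-- In a local field `k` of characteristic `p > 0` (modeled as a Hausdorff topological
field of characteristic `p` with compact open maximal subring `𝒪`), for a discrete
cocompact additive subgroup `L`, `ℓ, w ∈ k`, `r ∈ k^×`, the counting function
`a ↦ #((ℓ + L) ∩ a(w + r𝒪))` on `k^×` is locally constant, and for `‖a‖` sufficiently
small (i.e. for all nonzero `a` in a sufficiently small neighborhood of `0`) it equals
`1` if `ℓ ∈ L` and `0 ∈ w + r𝒪`, and `0` otherwise. -/
theorem stmt15 (k : Type*) (p : ℕ) [Field k] [TopologicalSpace k] [IsTopologicalRing k]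
    [T2Space k] (hp : p.Prime) [CharP k p]
    (L : AddSubgroup k) [DiscreteTopology L] [CompactSpace (k ⧸ L)]
    (O : Subring k) (hOc : IsCompact (O : Set k)) (hOo : IsOpen (O : Set k))
    (ℓ w r : k) (hr : r ≠ 0)
    (count : k → ℕ)
    (hcount : ∀ a : k, count a =
      Nat.card ↥{x : k | (∃ l ∈ L, x = ℓ + l) ∧ ∃ u ∈ O, x = a * (w + r * u)}) :
    (∀ a : k, a ≠ 0 → ∃ U ∈ nhds a, ∀ b ∈ U, b ≠ 0 → count b = count a) ∧
    (∃ U ∈ nhds (0 : k), ∀ a ∈ U, a ≠ 0 →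
      ((ℓ ∈ L ∧ ∃ u ∈ O, (0 : k) = w + r * u) → count a = 1) ∧
      (¬(ℓ ∈ L ∧ ∃ u ∈ O, (0 : k) = w + r * u) → count a = 0)) := by
  constructor
  · -- local constancy
    intro a ha
    obtain ⟨V, hVopen, hV0, hVinv⟩ := aux_inv_mem O hOc hOo
    set V₂ : Set k := (fun ε : k => r⁻¹ * (ε * w)) ⁻¹' (O : Set k) with hV₂
    have hV₂open : IsOpen V₂ :=
      hOo.preimage (continuous_const.mul (continuous_mul_right w))
    have hV₂0 : (0 : k) ∈ V₂ := by
      simp only [hV₂, Set.mem_preimage, zero_mul, mul_zero]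
      exact O.zero_mem
    set U : Set k := (fun ε : k => a * (1 + ε)) '' (V ∩ V₂) with hU
    have hUopen : IsOpen U := by
      have h1 : IsOpenMap (fun ε : k => a * ε) := (Homeomorph.mulLeft₀ a ha).isOpenMap
      have h2 : IsOpenMap (fun x : k => 1 + x) := (Homeomorph.addLeft (1 : k)).isOpenMap
      have h3 : IsOpenMap (fun ε : k => a * (1 + ε)) := h1.comp h2
      exact h3 _ (hVopen.inter hV₂open)
    have haU : a ∈ U := ⟨0, ⟨hV0, hV₂0⟩, by ring⟩
    refine ⟨U, hUopen.mem_nhds haU, ?_⟩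
    rintro b ⟨ε, ⟨hεV, hεV₂⟩, rfl⟩ hb
    set c : k := r⁻¹ * (ε * w) with hcdef
    have hcO : c ∈ O := hεV₂
    have hc : ε * w = r * c := by
      rw [hcdef, ← mul_assoc, mul_inv_cancel₀ hr, one_mul]
    obtain ⟨h1ε, v, hvO, hv1⟩ := hVinv ε hεV
    rw [hcount (a * (1 + ε)), hcount a]
    congr 1
    apply congrArg
    ext x
    simp only [Set.mem_setOf_eq]
    constructor
    · rintro ⟨hfirst, u, huO, hx⟩
      exact ⟨hfirst, c + (1 + ε) * u, O.add_mem hcO (O.mul_mem h1ε huO),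
        by linear_combination hx + a * hc⟩
    · rintro ⟨hfirst, u, huO, hx⟩
      refine ⟨hfirst, v * u - v * c, O.sub_mem (O.mul_mem hvO huO) (O.mul_mem hvO hcO), ?_⟩
      linear_combination hx + (a * r * (c - u)) * hv1 - a * hc
  · -- behavior near 0
    have hLclosed : IsClosed (L : Set k) := AddSubgroup.isClosed_of_discrete
    obtain ⟨D, hD, hDprop⟩ : ∃ D ∈ nhds (0 : k), ∀ x ∈ D,
        (∃ l ∈ L, x = ℓ + l) → (x = 0 ∧ ℓ ∈ L) := by
      by_cases hL : ℓ ∈ L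
      · obtain ⟨D, hD, hDL⟩ :=
          nhds_inter_eq_singleton_of_mem_discrete (isDiscrete_iff_discreteTopology.mpr ‹_›) (L.zero_mem : (0 : k) ∈ (L : Set k))
        refine ⟨D, hD, ?_⟩
        rintro x hx ⟨l, hl, rfl⟩
        have : ℓ + l ∈ D ∩ (L : Set k) := ⟨hx, L.add_mem hL hl⟩
        rw [hDL] at this
        exact ⟨this, hL⟩
      · refine ⟨(fun x : k => x - ℓ) ⁻¹' (L : Set k)ᶜ,
          (hLclosed.isOpen_compl.preimage (continuous_sub_right ℓ)).mem_nhds ?_, ?_⟩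
        · simp only [Set.mem_preimage, zero_sub, Set.mem_compl_iff, SetLike.mem_coe]
          intro h
          exact hL (by simpa using L.neg_mem h)
        · rintro x hx ⟨l, hl, rfl⟩
          exfalso
          exact hx (by simpa using hl)
    have hCcomp : IsCompact ((fun u : k => w + r * u) '' (O : Set k)) :=
      hOc.image (continuous_const.add (continuous_const.mul continuous_id))
    obtain ⟨U, hU, hUp⟩ := aux_tube hCcomp hD
    refine ⟨U, hU, ?_⟩
    intro a haU ha
    have hsub : ∀ x : k, ((∃ l ∈ L, x = ℓ + l) ∧ ∃ u ∈ O, x = a * (w + r * u)) →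
        x = 0 ∧ ℓ ∈ L ∧ ∃ u ∈ O, (0 : k) = w + r * u := by
      rintro x ⟨hfirst, u, huO, rfl⟩
      have hxD : a * (w + r * u) ∈ D := hUp a haU _ ⟨u, huO, rfl⟩
      obtain ⟨hx0, hℓL⟩ := hDprop _ hxD hfirst
      have hwru : w + r * u = 0 := by
        rcases mul_eq_zero.mp hx0 with h | h
        · exact absurd h ha
        · exact h
      exact ⟨hx0, hℓL, u, huO, hwru.symm⟩
    constructor
    · rintro ⟨hL, u0, hu0O, h0⟩
      rw [hcount a]
      have hset : {x : k | (∃ l ∈ L, x = ℓ + l) ∧ ∃ u ∈ O, x = a * (w + r * u)}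
          = {(0 : k)} := by
        ext x
        simp only [Set.mem_setOf_eq, Set.mem_singleton_iff]
        constructor
        · intro hx
          exact (hsub x hx).1
        · rintro rfl
          exact ⟨⟨-ℓ, L.neg_mem hL, by ring⟩, u0, hu0O, by rw [← h0]; ring⟩
      rw [hset]
      simp
    · intro hnot
      rw [hcount a]
      have hset : {x : k | (∃ l ∈ L, x = ℓ + l) ∧ ∃ u ∈ O, x = a * (w + r * u)}
          = (∅ : Set k) := by
        rw [Set.eq_empty_iff_forall_notMem]
        intro x hx
        obtain ⟨-, hℓL, hu⟩ := hsub x hx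
        exact hnot ⟨hℓL, hu⟩
      rw [hset]
      simp
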